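/- Let C be a category with finite limits and a generic proof θ : Θ → Λ. Then for every object X, the slice category C/X has a generic proof, given by the morphism id_X × θ : X × Θ → X × Λ over X (with structure maps the projections to X): for every morphism into an object of C/X there is a classifying map making the required pullback factor mutually through the given map. -/

import Mathlib

open CategoryTheory CategoryTheory.Limits

universe v u

/-- A generic proof in a category: `θ : Θ ⟶ Λ` such that every arrow `f : Y ⟶ X` is
classified by some `υ : X ⟶ Λ`, meaning that `f` and the pullback of `θ` along `υ`
factor through each other over `X`. -/
def IsGenericProof {C : Type u} [Category.{v} C] {Θ Λ : C} (θ : Θ ⟶ Λ) : Prop :=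
  ∀ {Y X : C} (f : Y ⟶ X), ∃ (υ : X ⟶ Λ) (W : C) (p : W ⟶ X) (q : W ⟶ Θ),
    IsPullback p q υ θ ∧ ∃ (e₁ : Y ⟶ W) (e₂ : W ⟶ Y), e₁ ≫ p = f ∧ e₂ ≫ f = p

variable {C : Type u} [Category.{v} C]

/-- The key pullback square in `C`. -/
lemma aux_isPullback [HasFiniteLimits C] {Θ Λ : C} (θ : Θ ⟶ Λ) (X : C)
    {Z W : C} (hZ : Z ⟶ X) {υ : Z ⟶ Λ} {p : W ⟶ Z} {q : W ⟶ Θ}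
    (hpb : IsPullback p q υ θ) :
    IsPullback p (prod.lift (p ≫ hZ) q) (prod.lift hZ υ) (prod.map (𝟙 X) θ) := by
  refine IsPullback.of_isLimit' ⟨by ext <;> simp [hpb.w]⟩ ?_
  refine PullbackCone.IsLimit.mk _
    (fun s => hpb.lift s.fst (s.snd ≫ prod.snd)
      (by simpa [prod.lift_snd] using congrArg (· ≫ (prod.snd : X ⨯ Λ ⟶ Λ)) s.condition))
    (fun s => by simp) ?_ ?_
  · intro s
    ext
    · have := congrArg (· ≫ (prod.fst : X ⨯ Λ ⟶ X)) s.condition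
      simp [prod.lift_fst] at this ⊢
      exact this
    · simp [prod.lift_snd]
  · intro s m hm₁ hm₂
    apply hpb.hom_ext
    · simpa using hm₁
    · rw [hpb.lift_snd]
      simpa [prod.lift_snd] using congrArg (· ≫ (prod.snd : X ⨯ Θ ⟶ Θ)) hm₂

/-- if a finite-limit category `C` has a generic proof `θ : Θ ⟶ Λ`, then
for every object `X` the slice `C/X` has a generic proof, given by
`𝟙_X × θ : X ⨯ Θ ⟶ X ⨯ Λ` over `X` (with the projections to `X` as structure maps). -/
theorem slice_genericProof [HasFiniteLimits C] {Θ Λ : C} (θ : Θ ⟶ Λ)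
    (hθ : IsGenericProof θ) (X : C) :
    IsGenericProof
      ((Over.homMk (prod.map (𝟙 X) θ) (by simp)) :
        Over.mk (prod.fst : X ⨯ Θ ⟶ X) ⟶ Over.mk (prod.fst : X ⨯ Λ ⟶ X)) := by
  intro Y Z f
  obtain ⟨υ, W, p, q, hpb, e₁, e₂, he₁, he₂⟩ := hθ f.left
  refine ⟨Over.homMk (prod.lift Z.hom υ) (by simp [prod.lift_fst]), Over.mk (p ≫ Z.hom),
    Over.homMk p rfl, Over.homMk (prod.lift (p ≫ Z.hom) q) (by simp [prod.lift_fst]), ?_,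
    Over.homMk e₁ (by simp [reassoc_of% he₁]), Over.homMk e₂ (by
      have : e₂ ≫ Y.hom = p ≫ Z.hom := by rw [← Over.w f, reassoc_of% he₂]
      simpa using this), ?_, ?_⟩
  · apply IsPullback.of_map_of_faithful (Over.forget X)
    simpa using aux_isPullback θ X Z.hom hpb
  · ext; simpa using he₁
  · ext; simpa using he₂
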